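/- On the unit circle, suppose v1 < 1/2, v1 + 3·v2 < 1, and 0 < ε < min((1-(v1+3v2))/2, (1/2-v1)/2). Place the slower defender at 1/4 at time 0 and the faster defender anywhere; then the attack at position 1/4 - v2 - ε at time 1 is unreachable by the slower defender, and the subsequent attack at 1/4 - v1 - v2 - 2ε at time 2 is unreachable by both defenders: the faster defender (which must take the time-1 attack) cannot reach it in one step, and the slower defender cannot reach it in two steps from 1/4, since (v1+v2+2ε) + 2v2 < 1. -/
import Mathlib


/-- Arc-length distance on the circle of circumference 1, with points
represented by arbitrary reals taken modulo 1. -/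
noncomputable def circDist (a b : ℝ) : ℝ :=
  min (Int.fract (a - b)) (1 - Int.fract (a - b))

/-- For speeds `v₁ ≥ v₂ > 0` with `v₁ < 1/2` and `v₁ + 3 v₂ < 1`, and
`0 < ε < min ((1-(v₁+3v₂))/2) ((1/2-v₁)/2)`: with the slower defender at `1/4`
at time 0, the attack at `1/4 - v₂ - ε` (time 1) is out of the slower
defender's one-step reach; the faster defender, which must thwart it, cannot
reach the subsequent attack at `1/4 - v₁ - v₂ - 2ε` (time 2) in one step from
`1/4 - v₂ - ε`; and the slower defender cannot reach that attack in two steps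
from `1/4`. -/
theorem breach_sequence (v₁ v₂ ε : ℝ) (h21 : v₂ ≤ v₁) (h2 : 0 < v₂)
    (h1 : v₁ < 1/2) (hsum : v₁ + 3 * v₂ < 1) (hε : 0 < ε)
    (hε' : ε < min ((1 - (v₁ + 3 * v₂)) / 2) ((1/2 - v₁) / 2)) :
    v₂ < circDist (1/4) (1/4 - v₂ - ε) ∧
    v₁ < circDist (1/4 - v₂ - ε) (1/4 - v₁ - v₂ - 2 * ε) ∧
    2 * v₂ < circDist (1/4) (1/4 - v₁ - v₂ - 2 * ε) := by
  obtain ⟨hεa, hεb⟩ := lt_min_iff.mp hε'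
  have f1 : Int.fract ((1/4 : ℝ) - (1/4 - v₂ - ε)) = v₂ + ε := by
    rw [show (1/4 : ℝ) - (1/4 - v₂ - ε) = v₂ + ε by ring]
    exact Int.fract_eq_self.mpr ⟨by linarith, by linarith⟩
  have f2 : Int.fract ((1/4 - v₂ - ε : ℝ) - (1/4 - v₁ - v₂ - 2 * ε)) = v₁ + ε := by
    rw [show (1/4 - v₂ - ε : ℝ) - (1/4 - v₁ - v₂ - 2 * ε) = v₁ + ε by ring]
    exact Int.fract_eq_self.mpr ⟨by linarith, by linarith⟩
  have f3 : Int.fract ((1/4 : ℝ) - (1/4 - v₁ - v₂ - 2 * ε)) = v₁ + v₂ + 2 * ε := by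
    rw [show (1/4 : ℝ) - (1/4 - v₁ - v₂ - 2 * ε) = v₁ + v₂ + 2 * ε by ring]
    exact Int.fract_eq_self.mpr ⟨by linarith, by linarith⟩
  refine ⟨?_, ?_, ?_⟩ <;> rw [circDist] <;>
    [rw [f1]; rw [f2]; rw [f3]] <;> rw [lt_min_iff] <;>
    constructor <;> linarith
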